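/- The affine space k^ℕ over an uncountable algebraically closed field k is not the union of countably many proper Zariski-closed subsets. Precisely: if (f_i)_{i∈ℕ} is a sequence of nonzero polynomials in k[z_1, z_2, ...], then there exists a point a ∈ k^ℕ with f_i(a) ≠ 0 for all i. -/

import Mathlib

open MvPolynomial

/-- A multivariate polynomial all of whose coefficients lie in a subfield comes from a
polynomial over the subfield. -/
lemma exists_map_eq_of_coeffs_mem {k : Type*} [Field k] (T : Subfield k)
    (p : MvPolynomial ℕ k) (hp : ∀ m, p.coeff m ∈ T) :
    ∃ q : MvPolynomial ℕ T, MvPolynomial.map (algebraMap T k) q = p := by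
  classical
  refine ⟨⟨p.support, fun m => ⟨p.coeff m, hp m⟩, fun m => ?_⟩, ?_⟩
  · simp [MvPolynomial.mem_support_iff, Subtype.ext_iff]
  · ext m
    rw [coeff_map]
    rfl

/-- `k^ℕ` over an uncountable algebraically closed field is not a union of countably many
proper Zariski-closed subsets: given nonzero polynomials `f i ∈ k[z_1, z_2, ...]` for
`i ∈ ℕ`, there is a point where none of them vanishes. -/
theorem exists_common_nonvanishing_point {k : Type*} [Field k] [IsAlgClosed k] [Uncountable k]
    (f : ℕ → MvPolynomial ℕ k) (hf : ∀ i, f i ≠ 0) :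
    ∃ a : ℕ → k, ∀ i, eval a (f i) ≠ 0 := by
  classical
  -- the subfield generated by all coefficients
  set S : Set k := ⋃ i, ((f i).coeffs : Set k) with hS
  have hScount : S.Countable := Set.countable_iUnion fun i => ((f i).coeffs : Set k).to_countable
  set T : Subfield k := Subfield.closure S with hT
  have hTcount : Cardinal.mk T ≤ Cardinal.aleph0 := by
    refine (Subfield.cardinalMk_closure_le_max S).trans ?_
    simp [Cardinal.mk_le_aleph0_iff, hScount.to_subtype]
  -- a transcendence basis of `k` over `T`
  obtain ⟨s, hs⟩ := exists_isTranscendenceBasis (↥T) k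
  -- it is uncountable, hence infinite
  have hcard : Cardinal.mk k = Cardinal.mk s :=
    IsAlgClosed.cardinal_eq_cardinal_transcendence_basis_of_aleph0_lt' _ hs hTcount
      (Cardinal.aleph0_lt_mk (α := k))
  have : Infinite s := by
    rw [← Cardinal.aleph0_le_mk_iff, ← hcard]
    exact (Cardinal.aleph0_lt_mk (α := k)).le
  -- pick countably many elements of the basis
  let e : ℕ ↪ s := Infinite.natEmbedding s
  let a : ℕ → k := fun n => ((e n : s) : k)
  have ha : AlgebraicIndependent (↥T) a := hs.1.comp e e.injective
  have hinj : Function.Injective (aeval (R := ↥T) a) :=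
    algebraicIndependent_iff_injective_aeval.mp ha
  refine ⟨a, fun i => ?_⟩
  obtain ⟨q, hq⟩ := exists_map_eq_of_coeffs_mem T (f i) fun m => by
    by_cases hm : (f i).coeff m = 0
    · rw [hm]; exact T.zero_mem
    · exact Subfield.subset_closure (Set.mem_iUnion.2 ⟨i, by
        simpa [MvPolynomial.mem_coeffs_iff] using ⟨m, hm, rfl⟩⟩)
  have hq0 : q ≠ 0 := by
    rintro rfl
    exact hf i (by simpa using hq.symm)
  have : eval a (f i) = aeval (R := ↥T) a q := by
    rw [← hq, eval_map, aeval_def]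
  rw [this]
  intro h
  exact hq0 (hinj (by simpa using h))
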